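/- Let T be a depth-first search tree of a graph K rooted at r, and let u, v be two distinct vertices of K that are not in an ancestor–descendant relation in T, with least common ancestor w. Then every path from u to v in K passes through a common ancestor of u and v in T. -/

import Mathlib

/-- `u` is an ancestor of `v` in the tree `T` rooted at `r`: `u` lies on every
(equivalently, the unique) path in `T` from `r` to `v`. -/
def IsAncestor {V : Type*} (T : SimpleGraph V) (r u v : V) : Prop :=
  ∀ p : T.Walk r v, p.IsPath → u ∈ p.support

/-- `T` is a DFS tree of `K` rooted at `r`: a spanning tree such that every edge of `K`
connects a vertex to one of its ancestors or descendants in `T`. -/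
def IsDFSTree {V : Type*} (K T : SimpleGraph V) (r : V) : Prop :=
  T ≤ K ∧ T.IsTree ∧ ∀ x y : V, K.Adj x y → IsAncestor T r x y ∨ IsAncestor T r y x

lemma isAncestor_refl {V : Type*} (T : SimpleGraph V) (r a : V) : IsAncestor T r a a :=
  fun p _ => p.end_mem_support

lemma isAncestor_trans {V : Type*} [DecidableEq V] {T : SimpleGraph V} {r a b c : V}
    (hab : IsAncestor T r a b) (hbc : IsAncestor T r b c) : IsAncestor T r a c := by
  intro p hp
  have hb : b ∈ p.support := hbc p hp
  have := hab (p.takeUntil b hb) (hp.takeUntil hb)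
  exact p.support_takeUntil_subset hb this

lemma isAncestor_total {V : Type*} [DecidableEq V] {T : SimpleGraph V} {r a b c : V} (hT : T.IsTree)
    (hac : IsAncestor T r a c) (hbc : IsAncestor T r b c) :
    IsAncestor T r a b ∨ IsAncestor T r b a := by
  obtain ⟨q, hq, huniq⟩ := hT.existsUnique_path r c
  have ha : a ∈ q.support := hac q hq
  have hb : b ∈ q.support := hbc q hq
  by_cases ha1 : a ∈ (q.takeUntil b hb).support
  · left
    intro p hp
    have : p = q.takeUntil b hb := by
      obtain ⟨q', hq', huniq'⟩ := hT.existsUnique_path r b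
      rw [huniq' p hp, huniq' (q.takeUntil b hb) (hq.takeUntil hb)]
    rw [this]; exact ha1
  · -- a is on the part of q after b
    have ha2 : a ∈ (q.dropUntil b hb).support := by
      have := ha
      rw [← q.take_spec hb, SimpleGraph.Walk.mem_support_append_iff] at this
      tauto
    right
    set q1 := q.takeUntil b hb with hq1def
    set q2 := q.dropUntil b hb with hq2def
    set q3 := q2.takeUntil a ha2 with hq3def
    have hq1 : q1.IsPath := hq.takeUntil hb
    have hq2 : q2.IsPath := hq.dropUntil hb
    have hq3 : q3.IsPath := hq2.takeUntil ha2
    -- q1.append q3 is a path from r to a containing b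
    have hnodupq : (q1.support ++ q2.support.tail).Nodup := by
      have := hq.support_nodup
      rwa [← q.take_spec hb, SimpleGraph.Walk.support_append] at this
    have hpath : (q1.append q3).IsPath := by
      rw [SimpleGraph.Walk.isPath_def, SimpleGraph.Walk.support_append]
      rw [List.nodup_append]
      refine ⟨hq1.support_nodup, hq3.support_nodup.tail, ?_⟩
      intro x hx1 y hx3 hxy
      subst hxy
      have hx3' : x ∈ q2.support.tail := by
        have hxq3 : x ∈ q3.support := List.mem_of_mem_tail hx3
        have hsub := q2.support_takeUntil_subset ha2 hxq3
        rw [SimpleGraph.Walk.support_eq_cons q2] at hsub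
        rcases List.mem_cons.mp hsub with h | h
        · -- x = b, but b is the head of q3, and x ∈ tail of q3.support, contradiction
          exfalso
          rw [h] at hx3
          have : q3.support = b :: q3.support.tail := SimpleGraph.Walk.support_eq_cons q3
          have hnd := hq3.support_nodup
          rw [this] at hnd
          exact (List.nodup_cons.mp hnd).1 hx3
        · exact h
      exact (List.disjoint_of_nodup_append hnodupq) hx1 hx3'
    intro p hp
    have hpeq : p = q1.append q3 := by
      obtain ⟨q', hq', huniq'⟩ := hT.existsUnique_path r a
      rw [huniq' p hp, huniq' (q1.append q3) hpath]
    rw [hpeq, SimpleGraph.Walk.mem_support_append_iff]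
    left
    exact q1.end_mem_support

lemma walk_common_ancestor {V : Type*} [DecidableEq V] {K T : SimpleGraph V} {r : V}
    (hT : IsDFSTree K T r) {u v : V} (p : K.Walk u v) :
    ∃ z ∈ p.support, IsAncestor T r z u ∧ IsAncestor T r z v := by
  induction p with
  | nil => exact ⟨_, SimpleGraph.Walk.start_mem_support _, isAncestor_refl T r _, isAncestor_refl T r _⟩
  | @cons a b c hadj q ih =>
    obtain ⟨z, hz, hzb, hzc⟩ := ih
    rcases hT.2.2 a b hadj with hab | hba
    · -- a is ancestor of b; z and a are both ancestors of b, hence comparable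
      rcases isAncestor_total hT.2.1 hzb hab with hza | haz
      · exact ⟨z, List.mem_cons_of_mem _ hz, hza, hzc⟩
      · exact ⟨a, SimpleGraph.Walk.start_mem_support _, isAncestor_refl T r a,
          isAncestor_trans haz hzc⟩
    · exact ⟨z, List.mem_cons_of_mem _ hz, isAncestor_trans hzb hba, hzc⟩

/-- Let `T` be a DFS tree of `K` rooted at `r`, and `u ≠ v` two vertices
not in ancestor–descendant relation in `T`, with least common ancestor `w`. Then every
path from `u` to `v` in `K` passes through a common ancestor of `u` and `v` in `T`. -/
theorem dfs_path_through_common_ancestor {V : Type*} [Fintype V]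
    (K T : SimpleGraph V) (r : V) (hT : IsDFSTree K T r)
    (u v w : V) (huv : u ≠ v)
    (h1 : ¬ IsAncestor T r u v) (h2 : ¬ IsAncestor T r v u)
    (hwu : IsAncestor T r w u) (hwv : IsAncestor T r w v)
    (hlca : ∀ z : V, IsAncestor T r z u → IsAncestor T r z v → IsAncestor T r z w)
    (p : K.Walk u v) (hp : p.IsPath) :
    ∃ z ∈ p.support, IsAncestor T r z u ∧ IsAncestor T r z v := by
  classical exact walk_common_ancestor hT p
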